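/- arXiv:2602.21966 — 5 statements merged into one kernel-verified Lean document; each statement's English description precedes it below -/
import Mathlib

section
/- For each mechanism M ∈ {GSP, VCG} and each fixed ε > 0, the smoothed expected value 𝒱_i^ε(α) and the smoothed expected payment 𝒫_i^{M,ε}(α) of every bidder i are continuous functions of the multiplier vector α on [1,A]^n. -/
open Finset MeasureTheory

namespace SponsoredShopping

noncomputable section

/-- An item is a pair `(i, j)`: bidder `i`'s `j`-th item. -/
abbrev Item (n m : ℕ) : Type := Fin n × Fin m

/-- An allocation assigns to each rank `k` (0-based) an item. -/
abbrev Alloc (n m : ℕ) : Type := Fin (n * m) ≃ Item n m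

/-- Maximum of `f` over a finite set, with value `0` on the empty set. -/
def fmax {ι : Type*} (s : Finset ι) (f : ι → ℝ) : ℝ :=
  WithBot.unbotD 0 (s.sup fun i => (f i : WithBot ℝ))

variable {n m : ℕ}

/-- An allocation is valid under bids `b` if bids are nonincreasing along ranks. -/
def ValidUnder (b : Item n m → ℝ) (a : Alloc n m) : Prop :=
  ∀ k k' : Fin (n * m), k ≤ k' → b (a k') ≤ b (a k)

/-- The value of bidder `i` under allocation `a`
(`c k` is the CTR of slot `k`, with `c k = 0` for `k ≥ K`). -/
def bidderValue (c : ℕ → ℝ) (v : Item n m → ℝ) (a : Alloc n m) (i : Fin n) : ℝ :=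
  ∑ k : Fin (n * m), if (a k).1 = i then c k * v (a k) else 0

/-- Social welfare of an allocation. -/
def wel (c : ℕ → ℝ) (v : Item n m → ℝ) (a : Alloc n m) : ℝ :=
  ∑ k : Fin (n * m), c k * v (a k)

/-- Optimal social welfare. -/
def welOpt (c : ℕ → ℝ) (v : Item n m → ℝ) : ℝ :=
  fmax (univ : Finset (Alloc n m)) (wel c v)

/-- GSP per-click price of the item ranked `k`: highest bid among lower-ranked
items belonging to other bidders (`0` if none). -/
def gspPrice (b : Item n m → ℝ) (a : Alloc n m) (k : Fin (n * m)) : ℝ :=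
  fmax (univ.filter fun k' : Fin (n * m) => k < k' ∧ (a k').1 ≠ (a k).1)
    (fun k' => b (a k'))

/-- Total GSP payment of bidder `i`. -/
def gspPay (c : ℕ → ℝ) (b : Item n m → ℝ) (a : Alloc n m) (i : Fin n) : ℝ :=
  ∑ k : Fin (n * m), if (a k).1 = i then c k * gspPrice b a k else 0

/-- Bid-welfare of an allocation. -/
def bidWelfare (c : ℕ → ℝ) (b : Item n m → ℝ) (a : Alloc n m) : ℝ :=
  ∑ k : Fin (n * m), c k * b (a k)

/-- Bids with bidder `i`'s bids zeroed out. -/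
def exclBids (b : Item n m → ℝ) (i : Fin n) : Item n m → ℝ :=
  fun x => if x.1 = i then 0 else b x

/-- Bid-welfare obtained by bidders other than `i` in allocation `a`. -/
def othersWelfare (c : ℕ → ℝ) (b : Item n m → ℝ) (a : Alloc n m) (i : Fin n) : ℝ :=
  ∑ k : Fin (n * m), if (a k).1 ≠ i then c k * b (a k) else 0

/-- Optimal counterfactual bid-welfare without bidder `i`. -/
def woptWithout (c : ℕ → ℝ) (b : Item n m → ℝ) (i : Fin n) : ℝ :=
  fmax (univ : Finset (Alloc n m)) (fun a' => bidWelfare c (exclBids b i) a')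

/-- VCG payment of bidder `i`. -/
def vcgPay (c : ℕ → ℝ) (b : Item n m → ℝ) (a : Alloc n m) (i : Fin n) : ℝ :=
  woptWithout c b i - othersWelfare c b a i

/-- The two mechanisms considered. -/
inductive Mech | gsp | vcg

/-- Payment of bidder `i` under mechanism `M`. -/
def pay : Mech → (ℕ → ℝ) → (Item n m → ℝ) → Alloc n m → Fin n → ℝ
  | .gsp => gspPay
  | .vcg => vcgPay

/-- `S_k(a)`: the set of items assigned to the first `k` slots in `a`. -/
def topk (a : Alloc n m) (k : ℕ) : Finset (Item n m) :=
  (univ.filter fun r : Fin (n * m) => (r : ℕ) < k).image a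

/-- The (unnormalized) uniform measure on the cube `[0, ε]^{items}`. -/
def cube (n m : ℕ) (ε : ℝ) : Measure (Item n m → ℝ) :=
  Measure.pi fun _ => volume.restrict (Set.Icc (0 : ℝ) ε)

/-- Perturbed bids `b̃_{ij} = α_i v_{ij} + ξ_{ij}`. -/
def pert (α : Fin n → ℝ) (v : Item n m → ℝ) (ξ : Item n m → ℝ) : Item n m → ℝ :=
  fun x => α x.1 * v x + ξ x

/-- The rank (0-based slot) of item `x` under bids `b`: the number of items with
strictly higher bids.  When bids are tie-free this is the position of `x` in the
unique valid allocation. -/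
def rnk (b : Item n m → ℝ) (x : Item n m) : ℕ :=
  (univ.filter fun y : Item n m => b x < b y).card

/-- The value of bidder `i` under the (a.s. unique) valid allocation for bids `b`. -/
def valBid (c : ℕ → ℝ) (v : Item n m → ℝ) (b : Item n m → ℝ) (i : Fin n) : ℝ :=
  ∑ j : Fin m, c (rnk b (i, j)) * v (i, j)

/-- GSP payment of bidder `i` under the (a.s. unique) valid allocation for bids `b`. -/
def gspPayBid (c : ℕ → ℝ) (b : Item n m → ℝ) (i : Fin n) : ℝ :=
  ∑ j : Fin m, c (rnk b (i, j)) *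
    fmax (univ.filter fun y : Item n m => y.1 ≠ i ∧ b y < b (i, j)) b

/-- Bid-welfare of bidders other than `i` under the (a.s. unique) valid allocation. -/
def othersWelfareBid (c : ℕ → ℝ) (b : Item n m → ℝ) (i : Fin n) : ℝ :=
  ∑ x : Item n m, if x.1 ≠ i then c (rnk b x) * b x else 0

/-- VCG payment of bidder `i` under the (a.s. unique) valid allocation for bids `b`. -/
def vcgPayBid (c : ℕ → ℝ) (b : Item n m → ℝ) (i : Fin n) : ℝ :=
  woptWithout c b i - othersWelfareBid c b i

/-- Payment under mechanism `M` as a function of bids alone. -/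
def payBid : Mech → (ℕ → ℝ) → (Item n m → ℝ) → Fin n → ℝ
  | .gsp => gspPayBid
  | .vcg => vcgPayBid

/-- Smoothed expected value `𝒱_i^ε(α)` of bidder `i`. -/
def sVal (c : ℕ → ℝ) (v : Item n m → ℝ) (ε : ℝ) (α : Fin n → ℝ) (i : Fin n) : ℝ :=
  (ε ^ (n * m))⁻¹ * ∫ ξ, valBid c v (pert α v ξ) i ∂(cube n m ε)

/-- Smoothed expected payment `𝒫_i^{M,ε}(α)` of bidder `i`. -/
def sPay (M : Mech) (c : ℕ → ℝ) (v : Item n m → ℝ) (ε : ℝ) (α : Fin n → ℝ)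
    (i : Fin n) : ℝ :=
  (ε ^ (n * m))⁻¹ * ∫ ξ, payBid M c (pert α v ξ) i ∂(cube n m ε)

/-- The induced distribution over allocations in the smoothed game:
the probability that `a` is the realized (valid) allocation. -/
def inducedDist (v : Item n m → ℝ) (ε : ℝ) (α : Fin n → ℝ) (a : Alloc n m) : ℝ :=
  (ε ^ (n * m))⁻¹ * ((cube n m ε) {ξ | ValidUnder (pert α v ξ) a}).toReal

/-! ### Auxiliary lemmas -/

section Aux

lemma fmax_eq_sup' {ι : Type*} {s : Finset ι} (h : s.Nonempty) (f : ι → ℝ) :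
    fmax s f = s.sup' h f := by
  have h2 : (s.sup fun i => (f i : WithBot ℝ)) = ((s.sup' h f : ℝ) : WithBot ℝ) :=
    (Finset.coe_sup' h f).symm
  rw [fmax, h2, WithBot.unbotD_coe]

lemma abs_fmax_le {ι : Type*} {s : Finset ι} {f : ι → ℝ} {M : ℝ} (hM : 0 ≤ M)
    (h : ∀ a ∈ s, |f a| ≤ M) : |fmax s f| ≤ M := by
  rcases s.eq_empty_or_nonempty with rfl | hs
  · simpa [fmax] using hM
  · rw [fmax_eq_sup' hs]
    obtain ⟨a, ha, hae⟩ := s.exists_mem_eq_sup' hs f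
    rw [hae]
    exact h a ha

lemma continuous_sup' {ι X : Type*} [TopologicalSpace X] (s : Finset ι) :
    ∀ (hs : s.Nonempty) (g : ι → X → ℝ), (∀ a ∈ s, Continuous (g a)) →
      Continuous fun x => s.sup' hs fun a => g a x := by
  classical
  induction s using Finset.cons_induction with
  | empty => intro hs; exact absurd hs (by simp)
  | cons a s ha ih =>
    intro hs g hg
    rcases s.eq_empty_or_nonempty with rfl | hs'
    · simpa using hg a (by simp)
    · have heq : (fun x => (Finset.cons a s ha).sup' hs fun b => g b x)
          = fun x => max (g a x) (s.sup' hs' fun b => g b x) := by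
        funext x; rw [Finset.sup'_cons hs']
      rw [heq]
      exact (hg a (by simp)).max (ih hs' g fun b hb => hg b (by simp [hb]))

lemma continuous_fmax {ι X : Type*} [TopologicalSpace X] (s : Finset ι) (g : ι → X → ℝ)
    (hg : ∀ a ∈ s, Continuous (g a)) :
    Continuous fun x => fmax s fun a => g a x := by
  rcases s.eq_empty_or_nonempty with rfl | hs
  · simpa [fmax] using continuous_const
  · have : (fun x => fmax s fun a => g a x) = fun x => s.sup' hs fun a => g a x := by
      funext x; exact fmax_eq_sup' hs _
    rw [this]
    exact continuous_sup' s hs g hg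

/-- Bids are tie-free: distinct items have distinct bids. -/
def TieFree (b : Item n m → ℝ) : Prop := ∀ x y : Item n m, x ≠ y → b x ≠ b y

lemma isOpen_tieFree : IsOpen {b : Item n m → ℝ | TieFree b} := by
  have h : {b : Item n m → ℝ | TieFree b}
      = ⋂ x, ⋂ y, {b : Item n m → ℝ | x ≠ y → b x ≠ b y} := by
    ext b; simp [TieFree, Set.mem_iInter]
  rw [h]
  refine isOpen_iInter_of_finite fun x => isOpen_iInter_of_finite fun y => ?_
  rcases eq_or_ne x y with rfl | hxy
  · have h3 : {b : Item n m → ℝ | x ≠ x → b x ≠ b x} = Set.univ := by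
      ext b; simp
    rw [h3]; exact isOpen_univ
  · have h2 : {b : Item n m → ℝ | x ≠ y → b x ≠ b y} = {b | b x ≠ b y} := by
      ext b; simp [hxy]
    rw [h2]
    exact isOpen_ne_fun (continuous_apply x) (continuous_apply y)

lemma tieFree_eventually {b : Item n m → ℝ} (hb : TieFree b) :
    ∀ᶠ b' in nhds b, ∀ x y : Item n m, (b' x < b' y ↔ b x < b y) := by
  rw [Filter.eventually_all]
  intro x
  rw [Filter.eventually_all]
  intro y
  rcases eq_or_ne x y with rfl | hxy
  · exact Filter.Eventually.of_forall fun b' => by simp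
  · rcases (hb x y hxy).lt_or_gt with h | h
    · have h2 : ∀ᶠ b' in nhds b, b' x < b' y :=
        Filter.eventually_iff.mpr
          ((isOpen_lt (continuous_apply x) (continuous_apply y)).mem_nhds h)
      exact h2.mono fun b' hb' => iff_of_true hb' h
    · have h2 : ∀ᶠ b' in nhds b, b' y < b' x :=
        Filter.eventually_iff.mpr
          ((isOpen_lt (continuous_apply y) (continuous_apply x)).mem_nhds h)
      refine h2.mono fun b' hb' => ?_
      constructor
      · intro h3; exact absurd (h3.trans hb') (lt_irrefl _)
      · intro h3; exact absurd (h3.trans h) (lt_irrefl _)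

lemma rnk_eventually {b : Item n m → ℝ} (hb : TieFree b) :
    ∀ᶠ b' in nhds b, ∀ x, rnk b' x = rnk b x := by
  filter_upwards [tieFree_eventually hb] with b' h x
  unfold rnk
  congr 1
  exact Finset.filter_congr fun y _ => h x y



end Aux
section Aux2
variable {c : ℕ → ℝ} {v : Item n m → ℝ} {i : Fin n} {b : Item n m → ℝ}

lemma continuousAt_valBid (hb : TieFree b) :
    ContinuousAt (fun b' => valBid c v b' i) b := by
  have h0 : ContinuousAt (fun _ : Item n m → ℝ => valBid c v b i) b := continuousAt_const
  refine h0.congr ?_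
  filter_upwards [rnk_eventually hb] with b' h
  simp only [valBid, h]

lemma continuousAt_gspPayBid (hb : TieFree b) :
    ContinuousAt (fun b' => gspPayBid c b' i) b := by
  have hG : ContinuousAt (fun b' : Item n m → ℝ => ∑ j : Fin m,
      c (rnk b (i, j)) * fmax (univ.filter fun y : Item n m => y.1 ≠ i ∧ b y < b (i, j)) b') b := by
    refine Continuous.continuousAt (continuous_finset_sum _ fun j _ => ?_)
    exact continuous_const.mul (continuous_fmax _ _ fun y _ => continuous_apply y)
  refine hG.congr ?_
  filter_upwards [rnk_eventually hb, tieFree_eventually hb] with b' h1 h2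
  unfold gspPayBid
  refine Finset.sum_congr rfl fun j _ => ?_
  rw [h1]
  congr 2
  exact Finset.filter_congr fun y _ => by rw [h2 y (i, j)]

lemma continuous_woptWithout :
    Continuous fun b : Item n m → ℝ => woptWithout c b i := by
  unfold woptWithout
  refine continuous_fmax _ _ fun a _ => ?_
  unfold bidWelfare exclBids
  refine continuous_finset_sum _ fun k _ => ?_
  by_cases h : (a k).1 = i
  · simpa [h] using continuous_const
  · simp only [h, if_false]
    exact continuous_const.mul (continuous_apply _)

lemma continuousAt_vcgPayBid (hb : TieFree b) :
    ContinuousAt (fun b' => vcgPayBid c b' i) b := by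
  unfold vcgPayBid
  refine ContinuousAt.sub continuous_woptWithout.continuousAt ?_
  have hG : ContinuousAt (fun b' : Item n m → ℝ => ∑ x : Item n m,
      if x.1 ≠ i then c (rnk b x) * b' x else 0) b := by
    refine Continuous.continuousAt (continuous_finset_sum _ fun x _ => ?_)
    by_cases h : x.1 = i
    · simpa [h] using continuous_const
    · simp only [h, if_true, ne_eq, not_false_iff]
      exact continuous_const.mul (continuous_apply _)
  refine hG.congr ?_
  filter_upwards [rnk_eventually hb] with b' h1
  unfold othersWelfareBid
  exact Finset.sum_congr rfl fun x _ => by rw [h1]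

end Aux2
section Aux3

lemma cube_eq_restrict (n m : ℕ) (ε : ℝ) :
    cube n m ε
      = (volume : Measure (Item n m → ℝ)).restrict
          (Set.univ.pi fun _ => Set.Icc (0 : ℝ) ε) := by
  rw [cube]
  refine Measure.pi_eq fun s hs => ?_
  rw [Measure.restrict_apply (MeasurableSet.univ_pi hs), ← Set.pi_inter_distrib,
    volume_pi_pi]
  exact Finset.prod_congr rfl fun x _ =>
    (Measure.restrict_apply (hs x)).symm

lemma cube_absCont {n m : ℕ} {ε : ℝ} {S : Set (Item n m → ℝ)} (hS : volume S = 0) :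
    cube n m ε S = 0 := by
  rw [cube_eq_restrict]
  exact le_antisymm ((Measure.le_iff'.1 Measure.restrict_le_self S).trans hS.le) zero_le

lemma volume_tie_null {n m : ℕ} (x y : Item n m) (hxy : x ≠ y) (d : ℝ) :
    volume {ξ : Item n m → ℝ | ξ x = ξ y + d} = 0 := by
  classical
  set L : (Item n m → ℝ) →ₗ[ℝ] ℝ :=
    (LinearMap.proj x : (Item n m → ℝ) →ₗ[ℝ] ℝ) - (LinearMap.proj y : (Item n m → ℝ) →ₗ[ℝ] ℝ) with hLdef
  have hL : ∀ ξ : Item n m → ℝ, L ξ = ξ x - ξ y := fun ξ => rfl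
  have hset : {ξ : Item n m → ℝ | ξ x = ξ y + d}
      = (fun ξ => ξ + Pi.single x (-d)) ⁻¹' (LinearMap.ker L : Set (Item n m → ℝ)) := by
    ext ξ
    simp only [Set.mem_setOf_eq, Set.mem_preimage, SetLike.mem_coe, LinearMap.mem_ker, hL,
      Pi.add_apply, Pi.single_eq_same, Pi.single_eq_of_ne (Ne.symm hxy), add_zero]
    constructor <;> intro h <;> linarith
  rw [hset, measure_preimage_add_right]
  refine Measure.addHaar_submodule _ _ ?_
  intro h
  have h1 : Pi.single x (1:ℝ) ∈ LinearMap.ker L := h ▸ Submodule.mem_top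
  rw [LinearMap.mem_ker, hL] at h1
  rw [Pi.single_eq_same, Pi.single_eq_of_ne (Ne.symm hxy)] at h1
  norm_num at h1

lemma cube_tieFree_ae {n m : ℕ} (v : Item n m → ℝ) (ε : ℝ) (α : Fin n → ℝ) :
    ∀ᵐ ξ ∂(cube n m ε), TieFree (pert α v ξ) := by
  rw [MeasureTheory.ae_iff]
  refine measure_mono_null (t := ⋃ x : Item n m, ⋃ y : Item n m,
      {ξ : Item n m → ℝ | x ≠ y ∧ ξ x = ξ y + (α y.1 * v y - α x.1 * v x)}) ?_ ?_
  · intro ξ hξ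
    simp only [Set.mem_setOf_eq, TieFree, not_forall] at hξ
    obtain ⟨x, y, hxy, heq⟩ := hξ
    rw [not_not] at heq
    simp only [pert] at heq
    refine Set.mem_iUnion.2 ⟨x, Set.mem_iUnion.2 ⟨y, ⟨hxy, by linarith⟩⟩⟩
  · refine measure_iUnion_null fun x => measure_iUnion_null fun y => ?_
    rcases eq_or_ne x y with rfl | hxy
    · convert measure_empty
      · ext ξ; simp
      · infer_instance
    · refine cube_absCont (measure_mono_null (fun ξ h => h.2) ?_)
      exact volume_tie_null x y hxy _

lemma cube_box_ae {n m : ℕ} (ε : ℝ) :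
    ∀ᵐ ξ ∂(cube n m ε), ∀ x, ξ x ∈ Set.Icc (0:ℝ) ε := by
  rw [cube_eq_restrict]
  filter_upwards [MeasureTheory.ae_restrict_mem
    (MeasurableSet.univ_pi fun _ => measurableSet_Icc)] with ξ hξ x
  exact hξ x (Set.mem_univ x)

lemma cube_isFiniteMeasure {n m : ℕ} (ε : ℝ) : IsFiniteMeasure (cube n m ε) := by
  constructor
  rw [cube_eq_restrict, Measure.restrict_apply_univ, volume_pi_pi]
  simp only [Real.volume_Icc]
  exact ENNReal.prod_lt_top fun _ _ => ENNReal.ofReal_lt_top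

end Aux3
section Aux4

lemma continuous_pert_xi {n m : ℕ} (α : Fin n → ℝ) (v : Item n m → ℝ) :
    Continuous fun ξ : Item n m → ℝ => pert α v ξ :=
  continuous_pi fun x => continuous_const.add (continuous_apply x)

lemma continuous_pert_alpha {n m : ℕ} (v : Item n m → ℝ) (ξ : Item n m → ℝ) :
    Continuous fun α : Fin n → ℝ => pert α v ξ :=
  continuous_pi fun x => ((continuous_apply x.1).mul continuous_const).add continuous_const

lemma continuous_integral_pert {n m : ℕ}
    (F : (Item n m → ℝ) → ℝ)
    (hFc : ∀ b : Item n m → ℝ, TieFree b → ContinuousAt F b)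
    (C D : ℝ)
    (hFb : ∀ R : ℝ, 0 ≤ R → ∀ b : Item n m → ℝ, (∀ x, |b x| ≤ R) → |F b| ≤ C * R + D)
    (v : Item n m → ℝ) (hv : ∀ x, 0 ≤ v x) (ε : ℝ) (hε : 0 < ε) :
    Continuous fun α : Fin n → ℝ => ∫ ξ, F (pert α v ξ) ∂(cube n m ε) := by
  haveI : IsFiniteMeasure (cube n m ε) := cube_isFiniteMeasure ε
  rw [continuous_iff_continuousAt]
  intro α₀
  set R₀ : ℝ := (∑ i', (|α₀ i'| + 1)) * (∑ x : Item n m, v x) + ε with hR₀def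
  have hR₀ : 0 ≤ R₀ :=
    add_nonneg (mul_nonneg (Finset.sum_nonneg fun _ _ => by positivity)
      (Finset.sum_nonneg fun x _ => hv x)) hε.le
  apply MeasureTheory.continuousAt_of_dominated (bound := fun _ => C * R₀ + D)
  · refine Filter.Eventually.of_forall fun α => ?_
    have hopen : IsOpen {ξ : Item n m → ℝ | TieFree (pert α v ξ)} :=
      isOpen_tieFree.preimage (continuous_pert_xi α v)
    have hcont : ContinuousOn (fun ξ => F (pert α v ξ))
        {ξ : Item n m → ℝ | TieFree (pert α v ξ)} := fun ξ hξ =>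
      (ContinuousAt.comp (hFc _ hξ)
        ((continuous_pert_xi α v).continuousAt : ContinuousAt (fun ξ' : Item n m → ℝ => pert α v ξ') ξ)).continuousWithinAt
    have hrestrict : (cube n m ε).restrict {ξ : Item n m → ℝ | TieFree (pert α v ξ)}
        = cube n m ε :=
      Measure.restrict_eq_self_of_ae_mem (cube_tieFree_ae v ε α)
    have hm := ContinuousOn.aemeasurable (μ := cube n m ε) hcont hopen.measurableSet
    rw [hrestrict] at hm
    exact hm.aestronglyMeasurable
  · have hev : ∀ᶠ α in nhds α₀, ∀ i', |α i' - α₀ i'| < 1 := by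
      rw [Filter.eventually_all]
      intro i'
      have hco : Continuous fun α : Fin n → ℝ => |α i' - α₀ i'| :=
        ((continuous_apply i').sub continuous_const).abs
      refine Filter.eventually_iff.mpr ((isOpen_lt hco continuous_const).mem_nhds ?_)
      simp
    filter_upwards [hev] with α hα
    filter_upwards [cube_box_ae ε] with ξ hξ
    rw [Real.norm_eq_abs]
    refine hFb R₀ hR₀ _ fun x => ?_
    have h1 : |α x.1| ≤ |α₀ x.1| + 1 := by
      have h2 := hα x.1
      have h3 := abs_sub_abs_le_abs_sub (α x.1) (α₀ x.1)
      linarith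
    have h4 : |ξ x| ≤ ε := by
      rcases hξ x with ⟨ha, hb⟩
      rw [abs_of_nonneg ha]; exact hb
    have h5 : |α x.1| * v x ≤ (∑ i', (|α₀ i'| + 1)) * (∑ x' : Item n m, v x') := by
      refine mul_le_mul (h1.trans ?_) ?_ (hv x) ?_
      · exact Finset.single_le_sum (f := fun i' => |α₀ i'| + 1)
          (fun i' _ => by positivity) (Finset.mem_univ x.1)
      · exact Finset.single_le_sum (fun x' _ => hv x') (Finset.mem_univ x)
      · exact Finset.sum_nonneg fun _ _ => by positivity
    calc |pert α v ξ x| ≤ |α x.1 * v x| + |ξ x| := abs_add_le _ _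
      _ = |α x.1| * v x + |ξ x| := by rw [abs_mul, abs_of_nonneg (hv x)]
      _ ≤ R₀ := by rw [hR₀def]; linarith
  · exact MeasureTheory.integrable_const _
  · filter_upwards [cube_tieFree_ae v ε α₀] with ξ hξ
    have h1 : ContinuousAt (fun α : Fin n → ℝ => pert α v ξ) α₀ :=
      (continuous_pert_alpha v ξ).continuousAt
    exact ContinuousAt.comp (g := F) (f := fun α : Fin n → ℝ => pert α v ξ) (x := α₀)
      (hFc _ hξ) h1

end Aux4
/-- The smoothed expected value and payment of every bidder are continuous
functions of the multiplier vector on `[1, A]^n`. -/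
theorem smoothed_value_and_payment_continuousOn
    (n m K : ℕ) (v : Item n m → ℝ) (c : ℕ → ℝ) (A : ℝ)
    (hv : ∀ x : Item n m, 0 ≤ v x)
    (hvmono : ∀ (i : Fin n) (j j' : Fin m), j ≤ j' → v (i, j') ≤ v (i, j))
    (hc1 : c 0 ≤ 1) (hc0 : ∀ k, 0 ≤ c k) (hcmono : Antitone c)
    (hcK : ∀ k, K ≤ k → c k = 0)
    (hA : 1 ≤ A) (ε : ℝ) (hε : 0 < ε) (i : Fin n) :
    ContinuousOn (fun α : Fin n → ℝ => sVal c v ε α i)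
        (Set.univ.pi fun _ : Fin n => Set.Icc (1 : ℝ) A) ∧
      ∀ M : Mech,
        ContinuousOn (fun α : Fin n → ℝ => sPay M c v ε α i)
          (Set.univ.pi fun _ : Fin n => Set.Icc (1 : ℝ) A) := by
  classical
  have hcle : ∀ k, |c k| ≤ 1 := fun k => by
    rw [abs_of_nonneg (hc0 k)]
    exact (hcmono (Nat.zero_le k)).trans hc1
  have hval : Continuous fun α : Fin n → ℝ =>
      ∫ ξ, valBid c v (pert α v ξ) i ∂(cube n m ε) := by
    refine continuous_integral_pert _ (fun b hb => continuousAt_valBid hb) 0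
      (∑ x : Item n m, v x) ?_ v hv ε hε
    intro R hR b hbnd
    rw [zero_mul, zero_add]
    calc |valBid c v b i| ≤ ∑ j : Fin m, |c (rnk b (i, j)) * v (i, j)| :=
          Finset.abs_sum_le_sum_abs _ _
      _ ≤ ∑ j : Fin m, v (i, j) := Finset.sum_le_sum fun j _ => by
          rw [abs_mul, abs_of_nonneg (hv _)]
          exact mul_le_of_le_one_left (hv _) (hcle _)
      _ ≤ ∑ x : Item n m, v x := by
          rw [Fintype.sum_prod_type]
          exact Finset.single_le_sum (f := fun i' => ∑ j : Fin m, v (i', j))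
            (fun i' _ => Finset.sum_nonneg fun j _ => hv _) (Finset.mem_univ i)
  have hgsp : Continuous fun α : Fin n → ℝ =>
      ∫ ξ, gspPayBid c (pert α v ξ) i ∂(cube n m ε) := by
    refine continuous_integral_pert _ (fun b hb => continuousAt_gspPayBid hb) (m : ℝ) 0
      ?_ v hv ε hε
    intro R hR b hbnd
    rw [add_zero]
    calc |gspPayBid c b i|
        ≤ ∑ j : Fin m, |c (rnk b (i, j)) *
            fmax (univ.filter fun y : Item n m => y.1 ≠ i ∧ b y < b (i, j)) b| :=
          Finset.abs_sum_le_sum_abs _ _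
      _ ≤ ∑ _j : Fin m, R := Finset.sum_le_sum fun j _ => by
          rw [abs_mul]
          calc |c (rnk b (i, j))| * |fmax _ b| ≤ 1 * R :=
                mul_le_mul (hcle _) (abs_fmax_le hR fun y _ => hbnd y) (abs_nonneg _)
                  zero_le_one
            _ = R := one_mul R
      _ = (m : ℝ) * R := by
          rw [Finset.sum_const, Finset.card_univ, Fintype.card_fin, nsmul_eq_mul]
  have hvcg : Continuous fun α : Fin n → ℝ =>
      ∫ ξ, vcgPayBid c (pert α v ξ) i ∂(cube n m ε) := by
    refine continuous_integral_pert _ (fun b hb => continuousAt_vcgPayBid hb)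
      (((n * m : ℕ) : ℝ) + ((n * m : ℕ) : ℝ)) 0 ?_ v hv ε hε
    intro R hR b hbnd
    rw [add_zero, add_mul]
    have hwopt : |woptWithout c b i| ≤ ((n * m : ℕ) : ℝ) * R := by
      refine abs_fmax_le (by positivity) fun a _ => ?_
      calc |bidWelfare c (exclBids b i) a|
          ≤ ∑ k : Fin (n * m), |c k * exclBids b i (a k)| :=
            Finset.abs_sum_le_sum_abs _ _
        _ ≤ ∑ _k : Fin (n * m), R := Finset.sum_le_sum fun k _ => by
            rw [abs_mul]
            have hx : |exclBids b i (a k)| ≤ R := by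
              unfold exclBids
              split
              · simpa using hR
              · exact hbnd _
            calc |c k| * |exclBids b i (a k)| ≤ 1 * R :=
                  mul_le_mul (hcle _) hx (abs_nonneg _) zero_le_one
              _ = R := one_mul R
        _ = ((n * m : ℕ) : ℝ) * R := by
            rw [Finset.sum_const, Finset.card_univ, Fintype.card_fin, nsmul_eq_mul]
    have hoth : |othersWelfareBid c b i| ≤ ((n * m : ℕ) : ℝ) * R := by
      calc |othersWelfareBid c b i|
          ≤ ∑ x : Item n m, |if x.1 ≠ i then c (rnk b x) * b x else 0| :=
            Finset.abs_sum_le_sum_abs _ _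
        _ ≤ ∑ _x : Item n m, R := Finset.sum_le_sum fun x _ => by
            split
            · rw [abs_mul]
              calc |c (rnk b x)| * |b x| ≤ 1 * R :=
                    mul_le_mul (hcle _) (hbnd x) (abs_nonneg _) zero_le_one
                _ = R := one_mul R
            · simpa using hR
        _ = ((n * m : ℕ) : ℝ) * R := by
            rw [Finset.sum_const, Finset.card_univ]
            simp [Fintype.card_prod, nsmul_eq_mul]
    calc |vcgPayBid c b i| ≤ |woptWithout c b i| + |othersWelfareBid c b i| :=
          abs_sub _ _
      _ ≤ ((n * m : ℕ) : ℝ) * R + ((n * m : ℕ) : ℝ) * R := add_le_add hwopt hoth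
  refine ⟨?_, ?_⟩
  · simp only [sVal]
    exact (continuous_const.mul hval).continuousOn
  · intro M
    cases M with
    | gsp =>
      simp only [sPay, payBid]
      exact (continuous_const.mul hgsp).continuousOn
    | vcg =>
      simp only [sPay, payBid]
      exact (continuous_const.mul hvcg).continuousOn

end
end SponsoredShopping
end

section
/- If α_i = 1 for some bidder i, then under either mechanism M ∈ {GSP, VCG}, for any perturbation vector ξ ∈ [0,ε]^{nm} and any allocation a valid under the perturbed bids, bidder i's payment is at most their value plus ε·m: P_i^M(a, b̃) ≤ V_i(a) + ε·m. -/
open Finset MeasureTheory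

namespace SponsoredShopping

noncomputable section

variable {n m : ℕ}

lemma fmax_le {ι : Type*} {s : Finset ι} {f : ι → ℝ} {M : ℝ}
    (hM : 0 ≤ M) (h : ∀ x ∈ s, f x ≤ M) : fmax s f ≤ M := by
  have hsup : s.sup (fun i => (f i : WithBot ℝ)) ≤ (M : WithBot ℝ) :=
    Finset.sup_le fun i hi => by exact_mod_cast h i hi
  unfold fmax
  rcases h' : s.sup (fun i => (f i : WithBot ℝ)) with _ | x
  · exact hM
  · rw [h'] at hsup
    have hx : (x : ℝ) ≤ M := WithBot.coe_le_coe.mp hsup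
    exact hx

variable {n m : ℕ}

/-- Rearrangement: a valid allocation maximizes bid-welfare. -/
lemma bidWelfare_le_of_valid {b : Item n m → ℝ} {a : Alloc n m}
    (ha : ValidUnder b a) {c : ℕ → ℝ} (hcmono : Antitone c) (a' : Alloc n m) :
    bidWelfare c b a' ≤ bidWelfare c b a := by
  have hmono : Monovary (fun k : Fin (n * m) => c k) (fun k => b (a k)) := by
    intro k j hlt
    dsimp only at hlt
    have hjk : j < k := by
      by_contra h
      push_neg at h
      exact absurd (ha k j h) (not_le.mpr hlt)
    exact hcmono (by exact_mod_cast hjk.le : (j : ℕ) ≤ (k : ℕ))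
  have key := hmono.sum_smul_comp_perm_le_sum_smul (σ := a'.trans a.symm)
  simpa [bidWelfare, smul_eq_mul] using key

/-- A bidder with multiplier `1` pays at most their value plus `ε·m` under either
mechanism, for any perturbation in the cube and any valid allocation. -/
theorem payment_le_value_add_eps_of_multiplier_one
    (n m K : ℕ) (v : Item n m → ℝ) (c : ℕ → ℝ) (A : ℝ)
    (hv : ∀ x : Item n m, 0 ≤ v x)
    (hvmono : ∀ (i : Fin n) (j j' : Fin m), j ≤ j' → v (i, j') ≤ v (i, j))
    (hc1 : c 0 ≤ 1) (hc0 : ∀ k, 0 ≤ c k) (hcmono : Antitone c)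
    (hcK : ∀ k, K ≤ k → c k = 0)
    (hA : 1 ≤ A) (ε : ℝ) (hε : 0 ≤ ε)
    (α : Fin n → ℝ) (hα : ∀ i', α i' ∈ Set.Icc 1 A)
    (ξ : Item n m → ℝ) (hξ : ∀ x : Item n m, ξ x ∈ Set.Icc 0 ε)
    (i : Fin n) (hi : α i = 1)
    (a : Alloc n m) (ha : ValidUnder (pert α v ξ) a) (M : Mech) :
    pay M c (pert α v ξ) a i ≤ bidderValue c v a i + ε * m := by
  set b := pert α v ξ with hb
  have hb0 : ∀ x, 0 ≤ b x := by
    intro x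
    have h1 := (hα x.1).1
    have h2 := (hξ x).1
    have : 0 ≤ α x.1 * v x := mul_nonneg (le_trans zero_le_one h1) (hv x)
    simpa [hb, pert] using add_nonneg this h2
  have hck1 : ∀ k : ℕ, c k ≤ 1 := fun k => le_trans (hcmono (Nat.zero_le k)) hc1
  -- key bound on bidder i's own bid-welfare
  have hkey : (∑ k : Fin (n * m), if (a k).1 = i then c k * b (a k) else 0)
      ≤ bidderValue c v a i + ε * m := by
    have hstep : ∀ k : Fin (n * m),
        (if (a k).1 = i then c k * b (a k) else 0)
        ≤ (if (a k).1 = i then c k * v (a k) else 0)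
          + (if (a k).1 = i then ε else 0) := by
      intro k
      by_cases h : (a k).1 = i
      · simp only [h, if_pos]
        have hbv : b (a k) = v (a k) + ξ (a k) := by
          simp [hb, pert, h, hi]
        rw [hbv, mul_add]
        have : c ↑k * ξ (a k) ≤ ε := by
          calc c ↑k * ξ (a k) ≤ 1 * ξ (a k) :=
                mul_le_mul_of_nonneg_right (hck1 k) (hξ (a k)).1
            _ = ξ (a k) := one_mul _
            _ ≤ ε := (hξ (a k)).2
        linarith
      · simp [h]
    calc (∑ k : Fin (n * m), if (a k).1 = i then c k * b (a k) else 0)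
        ≤ ∑ k : Fin (n * m), ((if (a k).1 = i then c k * v (a k) else 0)
            + (if (a k).1 = i then ε else 0)) := Finset.sum_le_sum fun k _ => hstep k
      _ = bidderValue c v a i + ∑ k : Fin (n * m), (if (a k).1 = i then ε else 0) := by
          rw [Finset.sum_add_distrib]; rfl
      _ = bidderValue c v a i + ε * m := by
          congr 1
          have := Equiv.sum_comp a (fun x : Item n m => if x.1 = i then ε else 0)
          rw [this, Fintype.sum_prod_type]
          have h2 : ∀ x : Fin n, (∑ _j : Fin m, if x = i then ε else 0)
              = if x = i then ε * m else 0 := by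
            intro x; by_cases h : x = i <;> simp [h, mul_comm]
          simp only [h2]
          simp
  cases M with
  | gsp =>
    show gspPay c b a i ≤ _
    refine le_trans (le_trans (Finset.sum_le_sum ?_) le_rfl) hkey
    intro k _
    by_cases h : (a k).1 = i
    · simp only [h, if_pos]
      refine mul_le_mul_of_nonneg_left ?_ (hc0 k)
      refine fmax_le (hb0 (a k)) ?_
      intro k' hk'
      simp only [Finset.mem_filter] at hk'
      exact ha k k' hk'.2.1.le
    · simp [h]
  | vcg =>
    show vcgPay c b a i ≤ _
    have hwopt : woptWithout c b i ≤ bidWelfare c b a := by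
      refine fmax_le ?_ ?_
      · exact Finset.sum_nonneg fun k _ => mul_nonneg (hc0 k) (hb0 _)
      · intro a' _
        refine le_trans ?_ (bidWelfare_le_of_valid ha hcmono a')
        refine Finset.sum_le_sum fun k _ => ?_
        refine mul_le_mul_of_nonneg_left ?_ (hc0 k)
        by_cases h : (a' k).1 = i
        · simp [exclBids, h, hb0]
        · simp [exclBids, h]
    have hsplit : bidWelfare c b a = othersWelfare c b a i
        + ∑ k : Fin (n * m), (if (a k).1 = i then c k * b (a k) else 0) := by
      unfold bidWelfare othersWelfare
      rw [← Finset.sum_add_distrib]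
      refine Finset.sum_congr rfl fun k _ => ?_
      by_cases h : (a k).1 = i <;> simp [h]
    have : vcgPay c b a i ≤ ∑ k : Fin (n * m), (if (a k).1 = i then c k * b (a k) else 0) := by
      unfold vcgPay
      linarith [hwopt, hsplit.le]
    exact le_trans this hkey


end
end SponsoredShopping
end

section
/- Fix uniform bids b_{ij} = α_i v_{ij} with multipliers α_i ≥ 1, and fix an allocation a valid under b. Then there exists an optimal allocation a^opt with respect to the true valuations such that the GSP revenue satisfies Rev^GSP(a, b) ≥ Σ_{k=1}^{K} (c_k − c_{k+1}) · [ Σ_{(i,j) ∈ S_k(a^opt) \ S_k(a)} v_{ij} ]. -/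
open Finset MeasureTheory

namespace SponsoredShopping

noncomputable section

variable {n m : ℕ}

lemma le_fmax {ι : Type*} (s : Finset ι) (f : ι → ℝ) {i : ι} (hi : i ∈ s) :
    f i ≤ fmax s f := by
  have h : (f i : WithBot ℝ) ≤ s.sup fun j => (f j : WithBot ℝ) :=
    Finset.le_sup (f := fun j => ((f j : ℝ) : WithBot ℝ)) hi
  unfold fmax
  cases hs : s.sup fun j => (f j : WithBot ℝ) with
  | bot => rw [hs] at h; exact absurd h (by simp)
  | coe x => rw [hs] at h; simpa using h

lemma fmax_nonneg {ι : Type*} (s : Finset ι) (f : ι → ℝ) (h : ∀ i ∈ s, 0 ≤ f i) :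
    0 ≤ fmax s f := by
  rcases s.eq_empty_or_nonempty with rfl | ⟨i, hi⟩
  · simp [fmax]
  · exact le_trans (h i hi) (le_fmax s f hi)

lemma sum_split_pair {M : Type*} [AddCommMonoid M] {N : ℕ} (F : Fin N → M)
    (k k' : Fin N) (h : k ≠ k') :
    ∑ r, F r = F k + F k' + ∑ r ∈ (univ.erase k).erase k', F r := by
  rw [add_assoc,
    Finset.add_sum_erase _ F (Finset.mem_erase.mpr ⟨Ne.symm h, Finset.mem_univ k'⟩),
    Finset.add_sum_erase _ F (Finset.mem_univ k)]

lemma tele_sum (c : ℕ → ℝ) (K k : ℕ) :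
    ∑ t ∈ Finset.range K, (if k ≤ t then c t - c (t+1) else 0)
      = c (min k K) - c K := by
  induction K with
  | zero => simp
  | succ K ih =>
    rw [Finset.sum_range_succ, ih]
    rcases le_or_gt k K with h | h
    · rw [if_pos h, Nat.min_eq_left h, Nat.min_eq_left (h.trans (Nat.le_succ K))]
      ring
    · rw [if_neg (not_le.mpr h), Nat.min_eq_right h.le,
        Nat.min_eq_right (Nat.succ_le_of_lt h)]
      ring

/-- Revenue lemma for GSP: there is an optimal allocation whose displaced items'
layered value is covered by the revenue. -/
theorem gsp_revenue_covers_displaced_value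
    (n m K : ℕ) (v : Item n m → ℝ) (c : ℕ → ℝ)
    (hv : ∀ x : Item n m, 0 ≤ v x)
    (hvmono : ∀ (i : Fin n) (j j' : Fin m), j ≤ j' → v (i, j') ≤ v (i, j))
    (hc1 : c 0 ≤ 1) (hc0 : ∀ k, 0 ≤ c k) (hcmono : Antitone c)
    (hcK : ∀ k, K ≤ k → c k = 0)
    (α : Fin n → ℝ) (hα : ∀ i, 1 ≤ α i)
    (a : Alloc n m) (ha : ValidUnder (fun x => α x.1 * v x) a) :
    ∃ aopt : Alloc n m,
      (∀ a' : Alloc n m, wel c v a' ≤ wel c v aopt) ∧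
      ∑ t ∈ Finset.range K, (c t - c (t + 1)) *
          ∑ x ∈ topk aopt (t + 1) \ topk a (t + 1), v x
        ≤ ∑ i : Fin n, gspPay c (fun x => α x.1 * v x) a i := by
  classical
  set b : Item n m → ℝ := fun x => α x.1 * v x with hb
  unfold ValidUnder at ha
  have hα0 : ∀ i, (0:ℝ) < α i := fun i => lt_of_lt_of_le one_pos (hα i)
  have hbnn : ∀ x, 0 ≤ b x := fun x => mul_nonneg (le_trans zero_le_one (hα _)) (hv x)
  have hvb : ∀ x, v x ≤ b x := fun x => le_mul_of_one_le_left (hv x) (hα _)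
  have hpnn : ∀ k, 0 ≤ gspPrice b a k := fun k => fmax_nonneg _ _ (fun k' _ => hbnn _)
  -- choose an optimal allocation maximizing the alignment potential Φ
  have hAne : Nonempty (Alloc n m) := ⟨(finProdFinEquiv : Fin n × Fin m ≃ Fin (n*m)).symm⟩
  obtain ⟨amax, -, hamax⟩ := Finset.exists_max_image (univ : Finset (Alloc n m)) (wel c v)
      ⟨hAne.some, mem_univ _⟩
  set T : Finset (Alloc n m) := univ.filter (fun a0 => ∀ a', wel c v a' ≤ wel c v a0) with hT
  have hTne : T.Nonempty := ⟨amax, by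
    simp only [hT, mem_filter, mem_univ, true_and]
    exact fun a' => hamax a' (mem_univ _)⟩
  set Φ : Alloc n m → ℕ := fun a0 => ∑ k : Fin (n*m), (k : ℕ) * ((a.symm (a0 k)) : ℕ) with hΦ
  obtain ⟨aopt, haoptT, haoptΦ⟩ := Finset.exists_max_image T Φ hTne
  have hopt : ∀ a', wel c v a' ≤ wel c v aopt := (mem_filter.mp haoptT).2
  -- property P : within each bidder, aopt lists items in increasing a-rank
  have hP : ∀ k k' : Fin (n*m), k < k' → (aopt k).1 = (aopt k').1 →
      (a.symm (aopt k) : ℕ) < (a.symm (aopt k') : ℕ) := by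
    intro k k' hkk' hi
    by_contra hle
    push_neg at hle
    have hne : aopt k ≠ aopt k' := fun h => (Fin.ne_of_lt hkk') (aopt.injective h)
    have hlt : (a.symm (aopt k') : ℕ) < (a.symm (aopt k) : ℕ) :=
      lt_of_le_of_ne hle (fun h => hne ((a.symm.injective (Fin.val_injective h)).symm))
    have hbv : b (aopt k) ≤ b (aopt k') := by
      have h := ha (a.symm (aopt k')) (a.symm (aopt k)) (le_of_lt (Fin.lt_def.mpr hlt))
      rwa [Equiv.apply_symm_apply, Equiv.apply_symm_apply] at h
    have hvv : v (aopt k) ≤ v (aopt k') := by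
      simp only [hb] at hbv
      rw [← hi] at hbv
      exact le_of_mul_le_mul_left hbv (hα0 _)
    have hne' : k ≠ k' := Fin.ne_of_lt hkk'
    set a2 : Alloc n m := (Equiv.swap k k').trans aopt with ha2
    have ha2k : a2 k = aopt k' := by simp [ha2]
    have ha2k' : a2 k' = aopt k := by simp [ha2]
    have ha2r : ∀ r : Fin (n*m), r ≠ k → r ≠ k' → a2 r = aopt r := by
      intro r h1 h2; simp [ha2, Equiv.swap_apply_of_ne_of_ne h1 h2]
    have hck : c (k':ℕ) ≤ c (k:ℕ) := hcmono (le_of_lt (Fin.lt_def.mp hkk'))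
    have hwel : wel c v aopt ≤ wel c v a2 := by
      unfold wel
      rw [sum_split_pair (fun r : Fin (n*m) => c r * v (a2 r)) k k' hne',
          sum_split_pair (fun r : Fin (n*m) => c r * v (aopt r)) k k' hne']
      have htail : ∑ r ∈ (univ.erase k).erase k', c (r:ℕ) * v (a2 r)
           = ∑ r ∈ (univ.erase k).erase k', c (r:ℕ) * v (aopt r) := by
        refine Finset.sum_congr rfl fun r hr => ?_
        rw [ha2r r (Finset.ne_of_mem_erase (Finset.mem_of_mem_erase hr))
            (Finset.ne_of_mem_erase hr)]
      rw [htail, ha2k, ha2k']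
      nlinarith [mul_nonneg (sub_nonneg.mpr hck) (sub_nonneg.mpr hvv)]
    have ha2T : a2 ∈ T := by
      simp only [hT, mem_filter, mem_univ, true_and]
      exact fun a' => le_trans (hopt a') hwel
    have hΦlt : Φ aopt < Φ a2 := by
      simp only [hΦ]
      rw [sum_split_pair (fun r : Fin (n*m) => (r:ℕ) * ((a.symm (a2 r)):ℕ)) k k' hne',
          sum_split_pair (fun r : Fin (n*m) => (r:ℕ) * ((a.symm (aopt r)):ℕ)) k k' hne']
      have htail : ∑ r ∈ (univ.erase k).erase k', (r:ℕ) * ((a.symm (a2 r)):ℕ)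
           = ∑ r ∈ (univ.erase k).erase k', (r:ℕ) * ((a.symm (aopt r)):ℕ) := by
        refine Finset.sum_congr rfl fun r hr => ?_
        rw [ha2r r (Finset.ne_of_mem_erase (Finset.mem_of_mem_erase hr))
            (Finset.ne_of_mem_erase hr)]
      rw [htail, ha2k, ha2k']
      have hkval : (k:ℕ) < (k':ℕ) := Fin.lt_def.mp hkk'
      have key : (k:ℕ) * ((a.symm (aopt k)):ℕ) + (k':ℕ) * ((a.symm (aopt k')):ℕ)
          < (k:ℕ) * ((a.symm (aopt k')):ℕ) + (k':ℕ) * ((a.symm (aopt k)):ℕ) := by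
        have h1 : ((a.symm (aopt k')):ℤ) < ((a.symm (aopt k)):ℤ) := by exact_mod_cast hlt
        have h2 : ((k:ℕ):ℤ) < ((k':ℕ):ℤ) := by exact_mod_cast hkval
        have := mul_pos (sub_pos.mpr h2) (sub_pos.mpr h1)
        zify
        nlinarith [this]
      omega
    exact absurd (haoptΦ a2 ha2T) (not_le.mpr hΦlt)
  -- item version of P
  have hPitem : ∀ x y : Item n m, x.1 = y.1 → (a.symm x : ℕ) < (a.symm y : ℕ) →
      (aopt.symm x : ℕ) < (aopt.symm y : ℕ) := by
    intro x y h1 h2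
    rcases lt_trichotomy ((aopt.symm x : Fin (n*m)) : ℕ) ((aopt.symm y : Fin (n*m)) : ℕ)
      with h | h | h
    · exact h
    · exfalso
      have hxy : x = y := aopt.symm.injective (Fin.val_injective h)
      rw [hxy] at h2; omega
    · exfalso
      have h3 := hP (aopt.symm y) (aopt.symm x) (Fin.lt_def.mpr h)
        (by rw [Equiv.apply_symm_apply, Equiv.apply_symm_apply, h1])
      rw [Equiv.apply_symm_apply, Equiv.apply_symm_apply] at h3
      omega
  -- topk membership
  have htopk : ∀ (a1 : Alloc n m) (s : ℕ) (x : Item n m),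
      x ∈ topk a1 s ↔ ((a1.symm x : ℕ) < s) := by
    intro a1 s x
    simp only [topk, mem_image, mem_filter, mem_univ, true_and]
    constructor
    · rintro ⟨r, hr, rfl⟩; simpa using hr
    · intro h; exact ⟨a1.symm x, h, a1.apply_symm_apply x⟩
  -- the key per-slot lemma, via Hall's theorem
  have hkey : ∀ t : ℕ,
      ∑ x ∈ topk aopt (t+1) \ topk a (t+1), v x
        ≤ ∑ k ∈ univ.filter (fun k : Fin (n*m) => (k:ℕ) ≤ t), gspPrice b a k := by
    intro t
    set D : Finset (Item n m) := topk aopt (t+1) \ topk a (t+1) with hDdef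
    have hDmem : ∀ x ∈ D, (aopt.symm x : ℕ) ≤ t ∧ t < (a.symm x : ℕ) := by
      intro x hx
      rw [hDdef, mem_sdiff, htopk, htopk] at hx
      omega
    set F : Finset (Fin (n*m)) := univ.filter (fun k : Fin (n*m) => (k:ℕ) ≤ t) with hF
    set G : Item n m → Finset (Fin (n*m)) :=
      fun x => univ.filter (fun k : Fin (n*m) => (k:ℕ) ≤ t ∧ (a k).1 ≠ x.1) with hGdef
    set r : Item n m → Finset (Fin (n*m)) := fun x => if x ∈ D then G x else univ with hrdef
    have hDcard : D.card ≤ F.card := by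
      have h1 : D.card ≤ (topk aopt (t+1)).card := card_le_card sdiff_subset
      have h2 : (topk aopt (t+1)).card
          = (univ.filter fun q : Fin (n*m) => (q : ℕ) < t+1).card :=
        card_image_of_injective _ aopt.injective
      have h3 : (univ.filter fun q : Fin (n*m) => (q : ℕ) < t+1) = F := by
        rw [hF]; apply filter_congr; intro k _
        constructor <;> (intro hh; omega)
      rw [h3] at h2
      omega
    have hHall : ∀ s : Finset (Item n m), s.card ≤ (s.biUnion r).card := by
      intro s
      by_cases hsD : ∀ x ∈ s, x ∈ D
      · rcases s.eq_empty_or_nonempty with rfl | ⟨x0, hx0⟩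
        · simp
        by_cases hmix : ∃ x ∈ s, ∃ y ∈ s, x.1 ≠ y.1
        · obtain ⟨x, hxs, y, hys, hxy⟩ := hmix
          have hsub : F ⊆ s.biUnion r := by
            intro k hk
            rw [hF, mem_filter] at hk
            rcases ne_or_eq (a k).1 x.1 with h | h
            · refine mem_biUnion.mpr ⟨x, hxs, ?_⟩
              simp only [hrdef, hGdef, hsD x hxs, if_true, mem_filter, mem_univ, true_and]
              exact ⟨hk.2, h⟩
            · refine mem_biUnion.mpr ⟨y, hys, ?_⟩
              simp only [hrdef, hGdef, hsD y hys, if_true, mem_filter, mem_univ, true_and]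
              exact ⟨hk.2, by rw [h]; exact hxy⟩
          calc s.card ≤ D.card := card_le_card (fun x hx => hsD x hx)
            _ ≤ F.card := hDcard
            _ ≤ (s.biUnion r).card := card_le_card hsub
        · push_neg at hmix
          set A : Finset (Item n m) :=
            univ.filter (fun x => x.1 = x0.1 ∧ (a.symm x : ℕ) ≤ t) with hA
          set O : Finset (Item n m) :=
            univ.filter (fun x => x.1 = x0.1 ∧ (aopt.symm x : ℕ) ≤ t) with hO
          have hsO : s ⊆ O := by
            intro x hx
            rw [hO, mem_filter]
            exact ⟨mem_univ _, hmix x hx x0 hx0, (hDmem x (hsD x hx)).1⟩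
          have hAO : A ⊆ O := by
            intro y hy
            rw [hA, mem_filter] at hy
            rw [hO, mem_filter]
            refine ⟨mem_univ _, hy.2.1, ?_⟩
            have hx0D := hDmem x0 (hsD x0 hx0)
            have h1 : (a.symm y : ℕ) < (a.symm x0 : ℕ) := by omega
            have h2 := hPitem y x0 hy.2.1 h1
            omega
          have hdisj : Disjoint s A := by
            rw [Finset.disjoint_left]
            intro x hx hxA
            rw [hA, mem_filter] at hxA
            have := (hDmem x (hsD x hx)).2
            omega
          have hOF : O.card ≤ F.card := by
            have hsub : O.image aopt.symm ⊆ F := by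
              intro k hk
              obtain ⟨x, hx, rfl⟩ := mem_image.mp hk
              rw [hO, mem_filter] at hx
              rw [hF, mem_filter]
              exact ⟨mem_univ _, hx.2.2⟩
            calc O.card = (O.image aopt.symm).card :=
                  (card_image_of_injective _ aopt.symm.injective).symm
              _ ≤ F.card := card_le_card hsub
          have hcard1 : s.card + A.card ≤ F.card := by
            have h1 : (s ∪ A).card ≤ O.card := card_le_card (union_subset hsO hAO)
            rw [card_union_of_disjoint hdisj] at h1
            omega
          set Ar : Finset (Fin (n*m)) :=
            univ.filter (fun k => (k:ℕ) ≤ t ∧ (a k).1 = x0.1) with hAr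
          have hArA : Ar.card = A.card := by
            have him : Ar.image a = A := by
              ext x
              simp only [hAr, hA, mem_image, mem_filter, mem_univ, true_and]
              constructor
              · rintro ⟨k, ⟨hk1, hk2⟩, rfl⟩
                exact ⟨hk2, by simpa using hk1⟩
              · rintro ⟨h1, h2⟩
                exact ⟨a.symm x, ⟨h2, by rw [Equiv.apply_symm_apply]; exact h1⟩,
                  a.apply_symm_apply x⟩
            rw [← him, card_image_of_injective _ a.injective]
          have hGx0 : G x0 = F \ Ar := by
            ext k
            simp only [hGdef, hF, hAr, mem_filter, mem_sdiff, mem_univ, true_and]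
            tauto
          have hGcard : (G x0).card = F.card - Ar.card := by
            rw [hGx0]
            apply card_sdiff_of_subset
            intro k hk
            rw [hAr, mem_filter] at hk
            rw [hF, mem_filter]
            exact ⟨hk.1, hk.2.1⟩
          have hsubG : G x0 ⊆ s.biUnion r := by
            have hrx0 : r x0 = G x0 := by
              simp only [hrdef, hsD x0 hx0, if_true]
            rw [← hrx0]
            exact subset_biUnion_of_mem r hx0
          have hfin : s.card ≤ (G x0).card := by omega
          exact le_trans hfin (card_le_card hsubG)
      · push_neg at hsD
        obtain ⟨x, hxs, hxD⟩ := hsD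
        have hru : r x = univ := by simp only [hrdef, hxD, if_false]
        have h1 : (univ : Finset (Fin (n*m))) ⊆ s.biUnion r :=
          hru ▸ subset_biUnion_of_mem r hxs
        have h2 : s.card ≤ Fintype.card (Item n m) := card_le_univ s
        have h3 : Fintype.card (Item n m) = n * m := by
          simp [Fintype.card_prod]
        have h4 : (univ : Finset (Fin (n*m))).card = n * m := by simp
        have h5 := card_le_card h1
        omega
    obtain ⟨f, hfinj, hfr⟩ := (Finset.all_card_le_biUnion_card_iff_exists_injective r).mp hHall
    have hfD : ∀ x ∈ D, (f x : ℕ) ≤ t ∧ (a (f x)).1 ≠ x.1 := by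
      intro x hx
      have h := hfr x
      simp only [hrdef, hGdef, hx, if_true, mem_filter, mem_univ, true_and] at h
      exact h
    have hptw : ∀ x ∈ D, v x ≤ gspPrice b a (f x) := by
      intro x hx
      obtain ⟨hft, hfi⟩ := hfD x hx
      have hrank := (hDmem x hx).2
      have hmem : a.symm x ∈ univ.filter
          (fun k' : Fin (n*m) => f x < k' ∧ (a k').1 ≠ (a (f x)).1) := by
        rw [mem_filter]
        refine ⟨mem_univ _, Fin.lt_def.mpr (by omega), ?_⟩
        rw [Equiv.apply_symm_apply]
        exact Ne.symm hfi
      have h2 : b (a (a.symm x)) ≤ gspPrice b a (f x) := by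
        unfold gspPrice
        exact le_fmax _ (fun k' => b (a k')) hmem
      rw [Equiv.apply_symm_apply] at h2
      exact le_trans (hvb x) h2
    calc ∑ x ∈ D, v x ≤ ∑ x ∈ D, gspPrice b a (f x) := Finset.sum_le_sum hptw
      _ = ∑ k ∈ D.image f, gspPrice b a k :=
          (Finset.sum_image (fun x _ y _ h => hfinj h)).symm
      _ ≤ ∑ k ∈ F, gspPrice b a k := by
          apply Finset.sum_le_sum_of_subset_of_nonneg
          · intro k hk
            obtain ⟨x, hx, rfl⟩ := mem_image.mp hk
            rw [hF, mem_filter]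
            exact ⟨mem_univ _, (hfD x hx).1⟩
          · exact fun k _ _ => hpnn k
  -- assembly
  refine ⟨aopt, hopt, ?_⟩
  have hrev : ∑ i : Fin n, gspPay c b a i = ∑ k : Fin (n*m), c k * gspPrice b a k := by
    unfold gspPay
    rw [Finset.sum_comm]
    refine Finset.sum_congr rfl fun k _ => ?_
    rw [Finset.sum_ite_eq univ ((a k).1) (fun _ => c (k:ℕ) * gspPrice b a k)]
    simp
  have h1 : ∀ t : ℕ, (c t - c (t+1)) *
        ∑ k ∈ univ.filter (fun k : Fin (n*m) => (k:ℕ) ≤ t), gspPrice b a k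
      = ∑ k : Fin (n*m), (if (k:ℕ) ≤ t then c t - c (t+1) else 0) * gspPrice b a k := by
    intro t
    rw [Finset.mul_sum, Finset.sum_filter]
    exact Finset.sum_congr rfl fun k _ => by rw [ite_mul, zero_mul]
  calc ∑ t ∈ Finset.range K, (c t - c (t + 1)) *
          ∑ x ∈ topk aopt (t + 1) \ topk a (t + 1), v x
      ≤ ∑ t ∈ Finset.range K, (c t - c (t+1)) *
          ∑ k ∈ univ.filter (fun k : Fin (n*m) => (k:ℕ) ≤ t), gspPrice b a k := by
        refine Finset.sum_le_sum fun t _ => ?_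
        exact mul_le_mul_of_nonneg_left (hkey t) (sub_nonneg.mpr (hcmono (Nat.le_succ t)))
    _ = ∑ t ∈ Finset.range K, ∑ k : Fin (n*m),
          (if (k:ℕ) ≤ t then c t - c (t+1) else 0) * gspPrice b a k :=
        Finset.sum_congr rfl fun t _ => h1 t
    _ = ∑ k : Fin (n*m), ∑ t ∈ Finset.range K,
          (if (k:ℕ) ≤ t then c t - c (t+1) else 0) * gspPrice b a k := Finset.sum_comm
    _ = ∑ k : Fin (n*m), c (k:ℕ) * gspPrice b a k := by
        refine Finset.sum_congr rfl fun k _ => ?_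
        rw [← Finset.sum_mul, tele_sum]
        congr 1
        rcases le_or_gt (k:ℕ) K with h | h
        · rw [Nat.min_eq_left h, hcK K le_rfl, sub_zero]
        · rw [Nat.min_eq_right h.le, hcK K le_rfl, hcK _ h.le, sub_zero]
    _ = ∑ i : Fin n, gspPay c b a i := hrev.symm

end
end SponsoredShopping
end

section
/- Fix uniform bids b_{ij} = α_i v_{ij} with multipliers α_i ≥ 1 and an allocation a valid under b, and let a^opt be the optimal allocation obtained by ranking all items in descending order of true value v_{ij}, breaking ties in favor of the item appearing earlier in a. Then for every k ∈ [K], for any item (i,j) ∈ M_k := S_k(a) \ S_k(a^opt) and any item (i',j') ∈ O_k := S_k(a^opt) \ S_k(a), the owners are distinct: i ≠ i'. -/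
open Finset MeasureTheory

namespace SponsoredShopping

noncomputable section

variable {n m : ℕ}

/-- Disjoint ownership: for every prefix `k ≤ K`, the items winning in the
mechanism but not in the optimum, and vice versa, belong to distinct bidders. -/
theorem disjoint_ownership
    (n m K : ℕ) (v : Item n m → ℝ)
    (hv : ∀ x : Item n m, 0 ≤ v x)
    (hvmono : ∀ (i : Fin n) (j j' : Fin m), j ≤ j' → v (i, j') ≤ v (i, j))
    (α : Fin n → ℝ) (hα : ∀ i, 1 ≤ α i)
    (a : Alloc n m) (ha : ValidUnder (fun x => α x.1 * v x) a)
    (aopt : Alloc n m)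
    (hsort : ∀ r r' : Fin (n * m), r ≤ r' → v (aopt r') ≤ v (aopt r))
    (htie : ∀ x y : Item n m, v x = v y →
      (aopt.symm x ≤ aopt.symm y ↔ a.symm x ≤ a.symm y)) :
    ∀ k : ℕ, k ≤ K →
      ∀ x ∈ topk a k \ topk aopt k, ∀ y ∈ topk aopt k \ topk a k,
        x.1 ≠ y.1 := by
  have mem_topk : ∀ (a : Alloc n m) (k : ℕ) (x : Item n m),
      x ∈ topk a k ↔ ((a.symm x : ℕ) < k) := by
    intro a k x
    simp only [topk, mem_image, mem_filter, mem_univ, true_and]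
    constructor
    · rintro ⟨r, hr, rfl⟩; simpa using hr
    · intro h; exact ⟨a.symm x, h, a.apply_symm_apply x⟩
  intro k hk x hx y hy hxy
  rw [mem_sdiff, mem_topk, mem_topk] at hx hy
  obtain ⟨hx1, hx2⟩ := hx
  obtain ⟨hy1, hy2⟩ := hy
  push_neg at hx2 hy2
  -- a.symm x < a.symm y, aopt.symm y < aopt.symm x
  have haxy : a.symm x ≤ a.symm y := by
    have : (a.symm x : ℕ) < (a.symm y : ℕ) := lt_of_lt_of_le hx1 hy2
    exact le_of_lt this
  have hoyx : aopt.symm y ≤ aopt.symm x := by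
    have : (aopt.symm y : ℕ) < (aopt.symm x : ℕ) := lt_of_lt_of_le hy1 hx2
    exact le_of_lt this
  have hb := ha (a.symm x) (a.symm y) haxy
  simp only [a.apply_symm_apply] at hb
  rw [hxy] at hb
  have hα1 : (0:ℝ) < α y.1 := lt_of_lt_of_le one_pos (hα y.1)
  have hvyx : v y ≤ v x := le_of_mul_le_mul_left hb hα1
  have hvxy : v x ≤ v y := by
    have := hsort (aopt.symm y) (aopt.symm x) hoyx
    simpa using this
  have hveq : v x = v y := le_antisymm hvxy hvyx
  have h := (htie x y hveq).mpr haxy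
  have : (aopt.symm x : ℕ) ≤ (aopt.symm y : ℕ) := h
  omega

end
end SponsoredShopping
end

section
/- Fix uniform bids b_{ij} = α_i v_{ij} with multipliers α_i ≥ 1 and an allocation a valid under b, and let a^opt be the optimal allocation obtained by ranking all items in descending order of true value v_{ij}, breaking ties in favor of the item appearing earlier in a. Then for every k ∈ [K], Σ_i Σ_{(u,j) ∈ R_k(i)} b_{uj} ≥ Σ_{(i,j) ∈ S_k(a^opt) \ S_k(a)} b_{ij}, where R_k(i) := S_k(a_{-i}) \ S_k(a) is the set of replacement items entering the top k slots when bidder i is removed. -/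
open Finset MeasureTheory

namespace SponsoredShopping

noncomputable section

variable {n m : ℕ}

lemma mem_topk (a : Alloc n m) (k : ℕ) (x : Item n m) :
    x ∈ topk a k ↔ ((a.symm x : ℕ) < k) := by
  unfold topk
  simp only [Finset.mem_image, Finset.mem_filter, Finset.mem_univ, true_and]
  constructor
  · rintro ⟨r, hr, rfl⟩
    simpa using hr
  · intro h
    exact ⟨a.symm x, h, a.apply_symm_apply x⟩

lemma card_topk (a : Alloc n m) (k : ℕ) :
    (topk a k).card = (univ.filter fun r : Fin (n * m) => (r : ℕ) < k).card :=
  Finset.card_image_of_injective _ a.injective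

lemma bid_mono {b : Item n m → ℝ} {a : Alloc n m} (ha : ValidUnder b a)
    {x y : Item n m} (h : a.symm x ≤ a.symm y) : b y ≤ b x := by
  have := ha (a.symm x) (a.symm y) h
  simpa using this

lemma sum_dom {ι : Type*} (s t : Finset ι) (f : ι → ℝ)
    (hcard : s.card ≤ t.card) (hf0 : ∀ y ∈ t, 0 ≤ f y)
    (hle : ∀ x ∈ s, ∀ y ∈ t, f x ≤ f y) :
    ∑ x ∈ s, f x ≤ ∑ y ∈ t, f y := by
  rcases s.eq_empty_or_nonempty with hs | hs
  · simpa [hs] using Finset.sum_nonneg hf0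
  · have ht : t.Nonempty := Finset.card_pos.mp (lt_of_lt_of_le (Finset.card_pos.mpr hs) hcard)
    set M := t.inf' ht f with hM
    have hM0 : 0 ≤ M := by
      obtain ⟨y, hy, hyM⟩ := Finset.exists_mem_eq_inf' ht f
      rw [hM, hyM]; exact hf0 y hy
    calc ∑ x ∈ s, f x ≤ ∑ _x ∈ s, M :=
          Finset.sum_le_sum (fun x hx => Finset.le_inf' ht f (fun y hy => hle x hx y hy))
      _ = (s.card : ℝ) * M := by rw [Finset.sum_const, nsmul_eq_mul]
      _ ≤ (t.card : ℝ) * M := by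
          apply mul_le_mul_of_nonneg_right _ hM0
          exact_mod_cast hcard
      _ ≤ ∑ y ∈ t, f y := by
          have := Finset.card_nsmul_le_sum t f M (fun y hy => Finset.inf'_le f hy)
          simpa [nsmul_eq_mul] using this

lemma lemB {k : ℕ} (b : Item n m → ℝ) (hb : ∀ x, 0 ≤ b x)
    (a am : Alloc n m) (ha : ValidUnder b a) (i : Fin n)
    (hm1 : ∀ x y : Item n m, x.1 ≠ i → y.1 = i → am.symm x < am.symm y)
    (hm2 : ∀ x y : Item n m, x.1 ≠ i → y.1 ≠ i →
      (am.symm x ≤ am.symm y ↔ a.symm x ≤ a.symm y))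
    (T : Finset (Item n m))
    (hT : ∀ x ∈ T, x ∉ topk a k ∧ x.1 ≠ i)
    (hTcard : T.card ≤ ((topk a k).filter (fun x => x.1 = i)).card) :
    ∑ x ∈ T, b x ≤ ∑ x ∈ topk am k \ topk a k, b x := by
  classical
  set U := (topk am k \ topk a k).filter (fun x => x.1 ≠ i) with hU
  have hUsub : ∑ x ∈ U, b x ≤ ∑ x ∈ topk am k \ topk a k, b x :=
    Finset.sum_le_sum_of_subset_of_nonneg (Finset.filter_subset _ _) (fun y _ _ => hb y)
  refine le_trans ?_ hUsub
  by_cases hsub : T ⊆ U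
  · exact Finset.sum_le_sum_of_subset_of_nonneg hsub (fun y _ _ => hb y)
  · obtain ⟨x0, hx0T, hx0U⟩ := Finset.not_subset.mp hsub
    obtain ⟨hx0a, hx0i⟩ := hT x0 hx0T
    have hx0am : x0 ∉ topk am k := fun hmem =>
      hx0U (Finset.mem_filter.mpr ⟨Finset.mem_sdiff.mpr ⟨hmem, hx0a⟩, hx0i⟩)
    have hnoi : ∀ z ∈ topk am k, z.1 ≠ i := by
      intro z hz hzi
      have h1 := hm1 x0 z hx0i hzi
      rw [mem_topk] at hz hx0am
      rw [Fin.lt_def] at h1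
      omega
    have hUeq : U = topk am k \ topk a k := by
      rw [hU]
      apply Finset.filter_true_of_mem
      intro x hx
      exact hnoi x (Finset.mem_sdiff.mp hx).1
    have hsub2 : (topk a k).filter (fun x => x.1 = i) ⊆ topk a k \ topk am k := by
      intro z hz
      rw [Finset.mem_filter] at hz
      exact Finset.mem_sdiff.mpr ⟨hz.1, fun hzm => hnoi z hzm hz.2⟩
    have hcards : (topk a k).card = (topk am k).card := by
      rw [card_topk, card_topk]
    have hTU : T.card ≤ U.card := by
      have h1 := Finset.card_sdiff_add_card_inter (topk a k) (topk am k)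
      have h2 := Finset.card_sdiff_add_card_inter (topk am k) (topk a k)
      have h3 : ((topk a k) ∩ (topk am k)).card = ((topk am k) ∩ (topk a k)).card := by
        rw [Finset.inter_comm]
      have h4 := Finset.card_le_card hsub2
      rw [hUeq]
      omega
    have hexch : ∑ x ∈ T \ U, b x ≤ ∑ y ∈ U \ T, b y := by
      apply sum_dom
      · have h1 := Finset.card_sdiff_add_card_inter T U
        have h2 := Finset.card_sdiff_add_card_inter U T
        have h3 : (T ∩ U).card = (U ∩ T).card := by rw [Finset.inter_comm]
        omega
      · exact fun y _ => hb y
      · intro x hx y hy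
        rw [Finset.mem_sdiff] at hx hy
        obtain ⟨hxa, hxi⟩ := hT x hx.1
        have hxam : x ∉ topk am k := fun hmem =>
          hx.2 (Finset.mem_filter.mpr ⟨Finset.mem_sdiff.mpr ⟨hmem, hxa⟩, hxi⟩)
        have hyU := hy.1
        rw [hU, Finset.mem_filter, Finset.mem_sdiff] at hyU
        obtain ⟨⟨hyam, hya⟩, hyi⟩ := hyU
        have hle : am.symm y ≤ am.symm x := by
          rw [mem_topk] at hyam hxam
          rw [Fin.le_def]
          omega
        exact bid_mono ha ((hm2 y x hyi hxi).mp hle)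
    have e1 : ∑ x ∈ T \ U, b x + ∑ x ∈ T ∩ U, b x = ∑ x ∈ T, b x := by
      have := Finset.sum_sdiff (f := b) (Finset.inter_subset_left (s₁ := T) (s₂ := U))
      rwa [Finset.sdiff_inter_self_left] at this
    have e2 : ∑ x ∈ U \ T, b x + ∑ x ∈ U ∩ T, b x = ∑ x ∈ U, b x := by
      have := Finset.sum_sdiff (f := b) (Finset.inter_subset_left (s₁ := U) (s₂ := T))
      rwa [Finset.sdiff_inter_self_left] at this
    have e3 : ∑ x ∈ T ∩ U, b x = ∑ x ∈ U ∩ T, b x := by rw [Finset.inter_comm]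
    linarith

/-- The total bid of the replacement items dominates the total bid of the
displaced optimal items, for every prefix `k ≤ K`. -/
theorem replacement_bids_cover_displaced_bids
    (n m K : ℕ) (v : Item n m → ℝ)
    (hv : ∀ x : Item n m, 0 ≤ v x)
    (hvmono : ∀ (i : Fin n) (j j' : Fin m), j ≤ j' → v (i, j') ≤ v (i, j))
    (α : Fin n → ℝ) (hα : ∀ i, 1 ≤ α i)
    (a : Alloc n m) (ha : ValidUnder (fun x => α x.1 * v x) a)
    (aopt : Alloc n m)
    (hsort : ∀ r r' : Fin (n * m), r ≤ r' → v (aopt r') ≤ v (aopt r))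
    (htie : ∀ x y : Item n m, v x = v y →
      (aopt.symm x ≤ aopt.symm y ↔ a.symm x ≤ a.symm y))
    (aminus : Fin n → Alloc n m)
    (hmin1 : ∀ (i : Fin n) (x y : Item n m), x.1 ≠ i → y.1 = i →
      (aminus i).symm x < (aminus i).symm y)
    (hmin2 : ∀ (i : Fin n) (x y : Item n m), x.1 ≠ i → y.1 ≠ i →
      ((aminus i).symm x ≤ (aminus i).symm y ↔ a.symm x ≤ a.symm y)) :
    ∀ k : ℕ, k ≤ K →
      ∑ x ∈ topk aopt k \ topk a k, α x.1 * v x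
        ≤ ∑ i : Fin n, ∑ x ∈ topk (aminus i) k \ topk a k, α x.1 * v x := by
  classical
  intro k _hk
  set b : Item n m → ℝ := fun x => α x.1 * v x with hbdef
  have hb0 : ∀ x, 0 ≤ b x := fun x => mul_nonneg (le_trans zero_le_one (hα _)) (hv x)
  set D := topk aopt k \ topk a k with hD
  -- Claim 1: items of the same bidder in topk a move into topk aopt
  have claim1 : ∀ z x : Item n m, z ∈ topk a k → x ∈ D → z.1 = x.1 → z ∈ topk aopt k := by
    intro z x hz hx hzx
    rw [hD, Finset.mem_sdiff] at hx
    obtain ⟨hxopt, hxa⟩ := hx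
    have haz : a.symm z ≤ a.symm x := by
      rw [mem_topk] at hz
      rw [mem_topk] at hxa
      rw [Fin.le_def]
      omega
    have hbzx : b x ≤ b z := bid_mono ha haz
    have hpos : (0 : ℝ) < α x.1 := lt_of_lt_of_le zero_lt_one (hα _)
    have hvzx : v x ≤ v z := by
      have h' : α x.1 * v x ≤ α x.1 * v z := by
        rw [hbdef] at hbzx
        simpa [hzx] using hbzx
      exact le_of_mul_le_mul_left h' hpos
    rw [mem_topk] at hxopt ⊢
    have hle : aopt.symm z ≤ aopt.symm x := by
      by_contra hcon
      push_neg at hcon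
      have hvle : v z ≤ v x := by
        have := hsort (aopt.symm x) (aopt.symm z) (le_of_lt hcon)
        simpa using this
      have hveq : v z = v x := le_antisymm hvle hvzx
      have := (htie z x hveq).mpr haz
      exact absurd this (not_le.mpr hcon)
    rw [Fin.le_def] at hle
    omega
  have hcard_opt : (topk aopt k).card = (topk a k).card := by
    rw [card_topk, card_topk]
  have hDsub : D ⊆ topk aopt k := by
    rw [hD]; exact Finset.sdiff_subset
  have hDj : ∀ j : Fin n,
      (D.filter (fun x => x.1 = j)).card + ((topk a k).filter (fun x => x.1 = j)).card
        ≤ (topk a k).card := by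
    intro j
    rcases (D.filter (fun x => x.1 = j)).eq_empty_or_nonempty with he | ⟨x, hx⟩
    · rw [he]
      simpa using Finset.card_le_card (Finset.filter_subset (fun x => x.1 = j) (topk a k))
    · rw [Finset.mem_filter] at hx
      obtain ⟨hxD, hxj⟩ := hx
      have hsub1 : (D.filter (fun x => x.1 = j)) ⊆ topk aopt k :=
        (Finset.filter_subset _ _).trans hDsub
      have hsub2 : ((topk a k).filter (fun x => x.1 = j)) ⊆ topk aopt k := by
        intro z hz
        rw [Finset.mem_filter] at hz
        exact claim1 z x hz.1 hxD (hz.2.trans hxj.symm)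
      have hdisj : Disjoint (D.filter (fun x => x.1 = j))
          ((topk a k).filter (fun x => x.1 = j)) := by
        rw [Finset.disjoint_left]
        intro u hu hu'
        rw [Finset.mem_filter] at hu hu'
        have := hu.1
        rw [hD, Finset.mem_sdiff] at this
        exact this.2 hu'.1
      calc (D.filter (fun x => x.1 = j)).card + ((topk a k).filter (fun x => x.1 = j)).card
          = ((D.filter (fun x => x.1 = j)) ∪ ((topk a k).filter (fun x => x.1 = j))).card :=
            (Finset.card_union_of_disjoint hdisj).symm
        _ ≤ (topk aopt k).card :=
            Finset.card_le_card (Finset.union_subset hsub1 hsub2)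
        _ = (topk a k).card := hcard_opt
  have hDcard : D.card ≤ (topk a k).card :=
    hcard_opt ▸ Finset.card_le_card hDsub
  -- Hall's theorem setup
  set tfun : {x // x ∈ D} → Finset (Fin (n * m)) :=
    fun x => univ.filter (fun r : Fin (n * m) => (r : ℕ) < k ∧ (a r).1 ≠ x.val.1) with htfun
  have himg : ∀ j : Fin n,
      ((univ.filter fun r : Fin (n * m) => (r : ℕ) < k ∧ (a r).1 ≠ j).image a)
        = (topk a k).filter (fun x => x.1 ≠ j) := by
    intro j
    ext x
    simp only [Finset.mem_image, Finset.mem_filter, Finset.mem_univ, true_and, mem_topk]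
    constructor
    · rintro ⟨r, ⟨hrk, hrj⟩, rfl⟩
      constructor
      · simpa using hrk
      · exact hrj
    · rintro ⟨hx1, hx2⟩
      refine ⟨a.symm x, ⟨hx1, ?_⟩, a.apply_symm_apply x⟩
      rw [a.apply_symm_apply]
      exact hx2
  have htcard : ∀ x : {x // x ∈ D},
      (tfun x).card = ((topk a k).filter (fun y => y.1 ≠ x.val.1)).card := by
    intro x
    rw [htfun]
    rw [← himg x.val.1]
    exact (Finset.card_image_of_injective _ a.injective).symm
  have hHall : ∀ S : Finset {x // x ∈ D}, S.card ≤ (S.biUnion tfun).card := by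
    intro S
    rcases S.eq_empty_or_nonempty with he | ⟨x0, hx0⟩
    · simp [he]
    by_cases hsame : ∀ x ∈ S, (x : {x // x ∈ D}).val.1 = x0.val.1
    · -- all items in S owned by the same bidder
      have hsubU : tfun x0 ⊆ S.biUnion tfun := Finset.subset_biUnion_of_mem tfun hx0
      have hScard : S.card ≤ (D.filter (fun x => x.1 = x0.val.1)).card := by
        have : S.image Subtype.val ⊆ D.filter (fun x => x.1 = x0.val.1) := by
          intro y hy
          rw [Finset.mem_image] at hy
          obtain ⟨x, hxS, rfl⟩ := hy
          exact Finset.mem_filter.mpr ⟨x.2, hsame x hxS⟩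
        calc S.card = (S.image Subtype.val).card :=
              (Finset.card_image_of_injective _ Subtype.val_injective).symm
          _ ≤ _ := Finset.card_le_card this
      have hfilters := Finset.card_filter_add_card_filter_not
        (s := topk a k) (p := fun x => x.1 = x0.val.1)
      have := hDj x0.val.1
      have h2 := htcard x0
      have : ((topk a k).filter (fun y => y.1 ≠ x0.val.1)).card
          = ((topk a k).filter (fun y => ¬(y.1 = x0.val.1))).card := rfl
      calc S.card ≤ (D.filter (fun x => x.1 = x0.val.1)).card := hScard
        _ ≤ ((topk a k).filter (fun y => y.1 ≠ x0.val.1)).card := by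
            have := hDj x0.val.1
            omega
        _ = (tfun x0).card := (htcard x0).symm
        _ ≤ (S.biUnion tfun).card := Finset.card_le_card hsubU
    · push_neg at hsame
      obtain ⟨x1, hx1S, hx1ne⟩ := hsame
      have hcover : (univ.filter fun r : Fin (n * m) => (r : ℕ) < k) ⊆ S.biUnion tfun := by
        intro r hr
        rw [Finset.mem_filter] at hr
        by_cases hr0 : (a r).1 = x0.val.1
        · refine Finset.mem_biUnion.mpr ⟨x1, hx1S, ?_⟩
          rw [htfun]
          exact Finset.mem_filter.mpr ⟨Finset.mem_univ _, hr.2, by rw [hr0]; exact fun h => hx1ne h.symm⟩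
        · exact Finset.mem_biUnion.mpr ⟨x0, hx0,
            Finset.mem_filter.mpr ⟨Finset.mem_univ _, hr.2, hr0⟩⟩
      calc S.card ≤ Fintype.card {x // x ∈ D} := Finset.card_le_univ S
        _ = D.card := Fintype.card_coe D
        _ ≤ (topk a k).card := hDcard
        _ = (univ.filter fun r : Fin (n * m) => (r : ℕ) < k).card := card_topk a k
        _ ≤ (S.biUnion tfun).card := Finset.card_le_card hcover
  obtain ⟨f, hfinj, hfmem⟩ :=
    (Finset.all_card_le_biUnion_card_iff_exists_injective tfun).mp hHall
  have hfmem' : ∀ x : {x // x ∈ D}, ((f x : Fin (n * m)) : ℕ) < k ∧ (a (f x)).1 ≠ x.val.1 := by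
    intro x
    have := hfmem x
    rw [htfun, Finset.mem_filter] at this
    exact this.2
  -- split the sum by the fiber of the assignment
  have hsplit : ∑ x ∈ D, b x
      = ∑ j : Fin n, ∑ x ∈ D.attach.filter (fun x => (a (f x)).1 = j), b x.val := by
    rw [Finset.sum_fiberwise, Finset.sum_attach]
  have hperj : ∀ j : Fin n,
      ∑ x ∈ D.attach.filter (fun x => (a (f x)).1 = j), b x.val
        ≤ ∑ x ∈ topk (aminus j) k \ topk a k, b x := by
    intro j
    set Fj := D.attach.filter (fun x => (a (f x)).1 = j) with hFj
    set Tj := Fj.image Subtype.val with hTj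
    have hinj : ∀ x ∈ Fj, ∀ y ∈ Fj, (x : {x // x ∈ D}).val = y.val → x = y :=
      fun x _ y _ h => Subtype.ext h
    have hsum : ∑ x ∈ Tj, b x = ∑ x ∈ Fj, b x.val := by
      rw [hTj]
      exact Finset.sum_image hinj
    rw [← hsum]
    refine lemB (k := k) b hb0 a (aminus j) ha j (hmin1 j) (hmin2 j) Tj ?_ ?_
    · intro x hx
      rw [hTj, Finset.mem_image] at hx
      obtain ⟨x', hx', rfl⟩ := hx
      rw [hFj, Finset.mem_filter] at hx'
      have hxD : x'.val ∈ topk aopt k \ topk a k := hD ▸ x'.2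
      rw [Finset.mem_sdiff] at hxD
      refine ⟨hxD.2, ?_⟩
      exact fun h => (hfmem' x').2 (hx'.2.trans h.symm)
    · have hTcard : Tj.card = Fj.card := Finset.card_image_of_injective _ Subtype.val_injective
      rw [hTcard]
      apply Finset.card_le_card_of_injOn (fun x => a (f x))
      · intro x hx
        rw [Finset.mem_coe, Finset.mem_filter] at hx
        refine Finset.mem_filter.mpr ⟨?_, hx.2⟩
        rw [mem_topk, a.symm_apply_apply]
        exact (hfmem' x).1
      · intro x _ y _ h
        exact hfinj (a.injective h)
  calc ∑ x ∈ D, b x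
      = ∑ j : Fin n, ∑ x ∈ D.attach.filter (fun x => (a (f x)).1 = j), b x.val := hsplit
    _ ≤ ∑ j : Fin n, ∑ x ∈ topk (aminus j) k \ topk a k, b x :=
        Finset.sum_le_sum (fun j _ => hperj j)

end
end SponsoredShopping
end
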